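/- arXiv:1903.05990 — 2 statements merged into one kernel-verified Lean document; each statement's English description precedes it below -/
import Mathlib

section
/- Suppose λ(t) → λ∞ ∈ [0,∞) as t → ∞, where λ is the hazard rate of τ, and set M(t) = E[e^{−ρ(τ−t)}·1_{τ>t}]/S(t) with S(t) = exp(−∫₀ᵗ λ(s)ds) > 0 for all t. Then M(t) → λ∞/(ρ + λ∞) as t → ∞, and consequently c*(t) = ρ/(1 − (1−bρ)M(t)) → (ρ + λ∞)/(1 + bλ∞). -/
open MeasureTheory Filter

section Helpers
open Real Set

open MeasureTheory Filter Real Set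

lemma exp_shift_integrableOn (t c : ℝ) (hc : 0 < c) :
    IntegrableOn (fun s => Real.exp (-c * (s - t))) (Set.Ioi t) := by
  have h := (exp_neg_integrableOn_Ioi t hc).const_mul (Real.exp (c * t))
  have he : (fun s => Real.exp (-c * (s - t)))
      = fun s => Real.exp (c * t) * Real.exp (-c * s) := by
    funext s; rw [← Real.exp_add]; ring_nf
  rw [he]; exact h

lemma exp_shift_integral (t c : ℝ) (hc : 0 < c) :
    (∫ s in Set.Ioi t, Real.exp (-c * (s - t))) = 1 / c := by
  have key : (∫ s in Set.Ioi t, Real.exp (-c * (s - t)))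
      = 0 - (-Real.exp (-c * (t - t)) / c) := by
    apply integral_Ioi_of_hasDerivAt_of_tendsto (f := fun x => -Real.exp (-c*(x-t))/c) (m := 0)
    · exact (Continuous.continuousAt (by continuity)).continuousWithinAt
    · intro x _
      have h1 : HasDerivAt (fun x : ℝ => -c * (x - t)) (-c) x := by
        simpa using ((hasDerivAt_id x).sub_const t).const_mul (-c)
      have h2 := (h1.exp.neg).div_const c
      convert h2 using 1
      · rfl
      · rfl
      · field_simp
    · exact exp_shift_integrableOn t c hc
    · have h1 : Tendsto (fun x : ℝ => -c * (x - t)) atTop atBot := by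
        have := (tendsto_atTop_add_const_right atTop (-t) tendsto_id).const_mul_atTop_of_neg
          (neg_neg_iff_pos.2 hc)
        simpa [sub_eq_add_neg] using this
      have := (tendsto_exp_atBot.comp h1).neg.div_const c
      simpa using this
  rw [key]
  rw [sub_eq_iff_eq_add]
  field_simp
  simp

lemma M_bounds (ρ a A t : ℝ) (hρ : 0 < ρ) (ha : 0 ≤ a)
    (lam : ℝ → ℝ) (hcont : Continuous lam)
    (hlow : ∀ s, t ≤ s → a ≤ lam s) (hup : ∀ s, t ≤ s → lam s ≤ A)
    (S : ℝ → ℝ) (hS : ∀ u, S u = Real.exp (-∫ s in (0:ℝ)..u, lam s)) :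
    a / (ρ + A) * S t ≤ (∫ s in Set.Ioi t, Real.exp (-ρ * (s - t)) * S s * lam s) ∧
    (∫ s in Set.Ioi t, Real.exp (-ρ * (s - t)) * S s * lam s) ≤ A / (ρ + a) * S t := by
  have haA : a ≤ A := le_trans (hlow t le_rfl) (hup t le_rfl)
  have hρa : 0 < ρ + a := by linarith
  have hρA : 0 < ρ + A := by linarith
  have hSt : 0 < S t := by rw [hS]; exact Real.exp_pos _
  -- splitting of S
  have hSsplit : ∀ s, t ≤ s → S s = S t * Real.exp (-∫ u in t..s, lam u) := by
    intro s hs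
    rw [hS, hS, ← Real.exp_add]
    congr 1
    have := intervalIntegral.integral_add_adjacent_intervals
      (a := 0) (b := t) (c := s) (f := lam) (μ := volume)
      (hcont.intervalIntegrable _ _) (hcont.intervalIntegrable _ _)
    rw [← this]; ring
  -- interval integral bounds
  have hIb : ∀ s, t ≤ s → a * (s - t) ≤ (∫ u in t..s, lam u) ∧
      (∫ u in t..s, lam u) ≤ A * (s - t) := by
    intro s hs
    constructor
    · have := intervalIntegral.integral_mono_on hs
        (intervalIntegrable_const (c := a) (μ := MeasureTheory.volume)) (hcont.intervalIntegrable _ _)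
        (fun u hu => hlow u hu.1)
      simpa [mul_comm] using this
    · have := intervalIntegral.integral_mono_on hs (hcont.intervalIntegrable _ _)
        (intervalIntegrable_const (c := A) (μ := MeasureTheory.volume)) (fun u hu => hup u hu.1)
      simpa [mul_comm] using this
  -- pointwise bounds on the integrand
  have hub : ∀ s ∈ Set.Ioi t, Real.exp (-ρ * (s - t)) * S s * lam s
      ≤ (A * S t) * Real.exp (-(ρ + a) * (s - t)) := by
    intro s hs
    have hs' : t ≤ s := le_of_lt hs
    rw [hSsplit s hs']
    have h1 : Real.exp (-∫ u in t..s, lam u) ≤ Real.exp (-(a * (s - t))) :=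
      Real.exp_le_exp.2 (by linarith [(hIb s hs').1])
    have h2 : lam s ≤ A := hup s hs'
    have h0 : 0 ≤ lam s := le_trans ha (hlow s hs')
    calc Real.exp (-ρ * (s - t)) * (S t * Real.exp (-∫ u in t..s, lam u)) * lam s
        ≤ Real.exp (-ρ * (s - t)) * (S t * Real.exp (-(a * (s - t)))) * A := by
          apply mul_le_mul
          · apply mul_le_mul_of_nonneg_left _ (Real.exp_pos _).le
            exact mul_le_mul_of_nonneg_left h1 hSt.le
          · exact h2
          · exact h0
          · positivity
      _ = (A * S t) * Real.exp (-(ρ + a) * (s - t)) := by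
          rw [show (-(ρ + a) * (s - t)) = (-ρ * (s - t)) + (-(a * (s - t))) by ring,
            Real.exp_add]; ring
  have hlb : ∀ s ∈ Set.Ioi t, (a * S t) * Real.exp (-(ρ + A) * (s - t))
      ≤ Real.exp (-ρ * (s - t)) * S s * lam s := by
    intro s hs
    have hs' : t ≤ s := le_of_lt hs
    rw [hSsplit s hs']
    have h1 : Real.exp (-(A * (s - t))) ≤ Real.exp (-∫ u in t..s, lam u) :=
      Real.exp_le_exp.2 (by linarith [(hIb s hs').2])
    have h2 : a ≤ lam s := hlow s hs'
    calc (a * S t) * Real.exp (-(ρ + A) * (s - t))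
        = Real.exp (-ρ * (s - t)) * (S t * Real.exp (-(A * (s - t)))) * a := by
          rw [show (-(ρ + A) * (s - t)) = (-ρ * (s - t)) + (-(A * (s - t))) by ring,
            Real.exp_add]; ring
      _ ≤ Real.exp (-ρ * (s - t)) * (S t * Real.exp (-∫ u in t..s, lam u)) * lam s := by
          apply mul_le_mul
          · apply mul_le_mul_of_nonneg_left _ (Real.exp_pos _).le
            exact mul_le_mul_of_nonneg_left h1 hSt.le
          · exact h2
          · exact ha
          · positivity
  -- integrability
  have hubint : IntegrableOn (fun s => (A * S t) * Real.exp (-(ρ + a) * (s - t)))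
      (Set.Ioi t) := (exp_shift_integrableOn t (ρ + a) hρa).const_mul _
  have hlbint : IntegrableOn (fun s => (a * S t) * Real.exp (-(ρ + A) * (s - t)))
      (Set.Ioi t) := (exp_shift_integrableOn t (ρ + A) hρA).const_mul _
  have hfint : IntegrableOn (fun s => Real.exp (-ρ * (s - t)) * S s * lam s)
      (Set.Ioi t) := by
    apply Integrable.mono' hubint
    · apply Continuous.aestronglyMeasurable
      have hScont : Continuous S := by
        have : Continuous fun u => ∫ s in (0:ℝ)..u, lam s :=
          intervalIntegral.continuous_primitive (fun _ _ => hcont.intervalIntegrable _ _) 0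
        have := (this.neg.rexp)
        exact (funext hS : S = _) ▸ this
      exact ((continuous_const.mul (continuous_id.sub continuous_const)).rexp.mul
        hScont).mul hcont
    · rw [ae_restrict_iff' measurableSet_Ioi]
      filter_upwards with s hs
      rw [Real.norm_eq_abs, abs_of_nonneg]
      · exact hub s hs
      · have h0 : 0 ≤ lam s := le_trans ha (hlow s hs.le)
        have : 0 < S s := by rw [hS]; exact Real.exp_pos _
        positivity
  -- integral comparison
  have hI1 : (∫ s in Set.Ioi t, Real.exp (-ρ * (s - t)) * S s * lam s)
      ≤ ∫ s in Set.Ioi t, (A * S t) * Real.exp (-(ρ + a) * (s - t)) :=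
    setIntegral_mono_on hfint hubint measurableSet_Ioi hub
  have hI2 : (∫ s in Set.Ioi t, (a * S t) * Real.exp (-(ρ + A) * (s - t)))
      ≤ ∫ s in Set.Ioi t, Real.exp (-ρ * (s - t)) * S s * lam s :=
    setIntegral_mono_on hlbint hfint measurableSet_Ioi hlb
  rw [MeasureTheory.integral_const_mul, exp_shift_integral t (ρ + a) hρa] at hI1
  rw [MeasureTheory.integral_const_mul, exp_shift_integral t (ρ + A) hρA] at hI2
  constructor
  · calc a / (ρ + A) * S t = a * S t * (1 / (ρ + A)) := by ring
      _ ≤ _ := hI2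
  · calc (∫ s in Set.Ioi t, Real.exp (-ρ * (s - t)) * S s * lam s)
        ≤ A * S t * (1 / (ρ + a)) := hI1
      _ = A / (ρ + a) * S t := by ring

end Helpers

/-- If the hazard rate `λ(t) → λ∞ ∈ [0,∞)` as `t → ∞`, with survival function
`S(t) = exp(-∫₀ᵗ λ)` and `M(t) = E[e^{-ρ(τ-t)} | τ > t] = (∫ₜ^∞ e^{-ρ(s-t)} S(s)λ(s) ds)/S(t)`,
then `M(t) → λ∞/(ρ + λ∞)` and `c*(t) = ρ/(1 - (1-bρ)M(t)) → (ρ + λ∞)/(1 + bλ∞)`. -/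
theorem stmt_14 (ρ b : ℝ) (hρ : 0 < ρ) (hb : 0 ≤ b)
    (lam : ℝ → ℝ) (hcont : Continuous lam) (hnn : ∀ t, 0 ≤ lam t)
    (lamInf : ℝ) (hInf : 0 ≤ lamInf)
    (hlim : Tendsto lam atTop (nhds lamInf))
    (S M : ℝ → ℝ)
    (hS : ∀ t, S t = Real.exp (-∫ s in (0:ℝ)..t, lam s))
    (hM : ∀ t, M t = (∫ s in Set.Ioi t, Real.exp (-ρ * (s - t)) * S s * lam s) / S t) :
    Tendsto M atTop (nhds (lamInf / (ρ + lamInf))) ∧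
    Tendsto (fun t => ρ / (1 - (1 - b * ρ) * M t)) atTop
      (nhds ((ρ + lamInf) / (1 + b * lamInf))) := by
  set L := lamInf / (ρ + lamInf) with hL
  have hρlam : 0 < ρ + lamInf := by linarith
  have hmax0 : max lamInf 0 = lamInf := max_eq_left hInf
  have hlo : Tendsto (fun δ : ℝ => max (lamInf - δ) 0 / (ρ + (lamInf + δ)))
      (nhds 0) (nhds L) := by
    have hc : ContinuousAt (fun δ : ℝ => max (lamInf - δ) 0 / (ρ + (lamInf + δ))) 0 := by
      apply ContinuousAt.div
      · fun_prop
      · fun_prop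
      · simpa using hρlam.ne'
    have := hc.tendsto
    simpa [hmax0, hL] using this
  have hhi : Tendsto (fun δ : ℝ => (lamInf + δ) / (ρ + max (lamInf - δ) 0))
      (nhds 0) (nhds L) := by
    have hc : ContinuousAt (fun δ : ℝ => (lamInf + δ) / (ρ + max (lamInf - δ) 0)) 0 := by
      apply ContinuousAt.div
      · fun_prop
      · fun_prop
      · simpa [hmax0] using hρlam.ne'
    have := hc.tendsto
    simpa [hmax0, hL] using this
  have h1 : Tendsto M atTop (nhds L) := by
    rw [Metric.tendsto_atTop]
    intro ε hε
    have hev : ∀ᶠ δ in nhds (0:ℝ),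
        |max (lamInf - δ) 0 / (ρ + (lamInf + δ)) - L| < ε ∧
        |(lamInf + δ) / (ρ + max (lamInf - δ) 0) - L| < ε := by
      have e1 := hlo.eventually (Metric.ball_mem_nhds L hε)
      have e2 := hhi.eventually (Metric.ball_mem_nhds L hε)
      filter_upwards [e1, e2] with δ d1 d2
      rw [Real.dist_eq] at d1 d2
      exact ⟨d1, d2⟩
    obtain ⟨r, hr, hball⟩ := Metric.eventually_nhds_iff.mp hev
    set δ := r / 2 with hδ
    have hδpos : 0 < δ := by positivity
    have hδr : dist δ (0:ℝ) < r := by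
      rw [Real.dist_eq, sub_zero, abs_of_pos hδpos]; linarith
    obtain ⟨hd1, hd2⟩ := hball hδr
    have hev2 := hlim.eventually (Metric.ball_mem_nhds lamInf hδpos)
    rw [eventually_atTop] at hev2
    obtain ⟨T, hT⟩ := hev2
    refine ⟨T, fun t ht => ?_⟩
    have hbounds := M_bounds ρ (max (lamInf - δ) 0) (lamInf + δ) t hρ
      (le_max_right _ _) lam hcont
      (fun s hs => by
        have := hT s (le_trans ht hs)
        rw [Real.dist_eq, abs_lt] at this
        exact max_le (by linarith [this.1]) (hnn s))
      (fun s hs => by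
        have := hT s (le_trans ht hs)
        rw [Real.dist_eq, abs_lt] at this
        linarith [this.2]) S hS
    have hSt : 0 < S t := by rw [hS]; exact Real.exp_pos _
    have hMlo : max (lamInf - δ) 0 / (ρ + (lamInf + δ)) ≤ M t := by
      rw [hM, le_div_iff₀ hSt]
      exact hbounds.1
    have hMhi : M t ≤ (lamInf + δ) / (ρ + max (lamInf - δ) 0) := by
      rw [hM, div_le_iff₀ hSt]
      exact hbounds.2
    rw [Real.dist_eq, abs_lt]
    rw [abs_lt] at hd1 hd2
    constructor <;> linarith [hd1.1, hd1.2, hd2.1, hd2.2]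
  have hbl : 0 < 1 + b * lamInf := by positivity
  have hDeq : 1 - (1 - b * ρ) * L = ρ * (1 + b * lamInf) / (ρ + lamInf) := by
    rw [hL]; field_simp; ring
  have hDpos : 0 < 1 - (1 - b * ρ) * L := by rw [hDeq]; positivity
  refine ⟨h1, ?_⟩
  have h2 : Tendsto (fun t => ρ / (1 - (1 - b * ρ) * M t)) atTop
      (nhds (ρ / (1 - (1 - b * ρ) * L))) :=
    Tendsto.div tendsto_const_nhds
      (((h1.const_mul (1 - b * ρ)).const_sub 1)) hDpos.ne'
  have : (ρ + lamInf) / (1 + b * lamInf) = ρ / (1 - (1 - b * ρ) * L) := by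
    rw [hDeq]
    field_simp
  rw [this]
  exact h2
end

section
/- Define φ(t) = ∫ₜ^∞ e^{−ρs}S(s)(1 + bλ(s)) ds with ρ > 0, b ≥ 0, S(t) = exp(−∫₀ᵗ λ(s)ds) > 0 and λ ≥ 0 locally integrable. Then φ(t) = e^{−ρt}S(t)·(1 − (1−bρ)M_τ(−ρ,t))/ρ, and in particular φ(t) ≤ e^{−ρt}S(t)(1+bρ)/ρ and c*(t) := ρ/(1 − (1−bρ)M_τ(−ρ,t)) satisfies c*(t) = e^{−ρt}S(t)/φ(t) and φ(t)c*(t) ≤ e^{−ρt}. -/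
open MeasureTheory

open Set Filter
open scoped ENNReal NNReal

lemma cov_key (ρ : ℝ) (hρ : 0 < ρ) (lam : ℝ → ℝ) (hm : Measurable lam)
    (hnn : ∀ t, 0 ≤ lam t)
    (hloc : ∀ a b : ℝ, IntervalIntegrable lam volume a b)
    {a c : ℝ} (hac : a ≤ c) :
    ∫ s in Ioc a c, (ρ + lam s) * Real.exp (-(ρ * s + ∫ u in (0:ℝ)..s, lam u)) =
      Real.exp (-(ρ * a + ∫ u in (0:ℝ)..a, lam u)) -
        Real.exp (-(ρ * c + ∫ u in (0:ℝ)..c, lam u)) := by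
  set Λ : ℝ → ℝ := fun s => ∫ u in (0:ℝ)..s, lam u with hΛ
  set G : ℝ → ℝ := fun s => ρ * s + Λ s with hG
  have contΛ : Continuous Λ := intervalIntegral.continuous_primitive (fun a b => hloc a b) 0
  have contG : Continuous G := (continuous_const.mul continuous_id).add contΛ
  have hGdiff : ∀ p q : ℝ, (∫ s in p..q, (ρ + lam s)) = G q - G p := by
    intro p q
    rw [intervalIntegral.integral_add (intervalIntegrable_const) (hloc p q)]
    have h1 : (∫ _ in p..q, ρ) = ρ * (q - p) := by
      simp [intervalIntegral.integral_const, mul_comm]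
    have h2 : (∫ s in p..q, lam s) = Λ q - Λ p := by
      rw [hΛ]
      exact (intervalIntegral.integral_interval_sub_left (hloc 0 q) (hloc 0 p)).symm
    rw [h1, h2, hG]; ring
  have hΛmono : Monotone Λ := by
    intro x y hxy
    have h1 : 0 ≤ ∫ s in x..y, lam s :=
      intervalIntegral.integral_nonneg hxy (fun u _ => hnn u)
    have h2 : (∫ s in x..y, lam s) = Λ y - Λ x :=
      (intervalIntegral.integral_interval_sub_left (hloc 0 y) (hloc 0 x)).symm
    linarith
  have smono : StrictMono G := by
    intro x y hxy
    have h1 := hΛmono hxy.le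
    have h2 : ρ * x < ρ * y := by nlinarith
    simp only [hG]
    linarith
  have hΛnonneg : ∀ s : ℝ, 0 ≤ s → 0 ≤ Λ s := fun s hs =>
    intervalIntegral.integral_nonneg hs (fun u _ => hnn u)
  have hΛnonpos : ∀ s : ℝ, s ≤ 0 → Λ s ≤ 0 := by
    intro s hs
    have h0 : Λ s = -∫ u in s..(0:ℝ), lam u := intervalIntegral.integral_symm s 0
    have h1 : 0 ≤ ∫ u in s..(0:ℝ), lam u :=
      intervalIntegral.integral_nonneg hs (fun u _ => hnn u)
    rw [h0]; linarith
  have htop : Tendsto G atTop atTop := by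
    apply tendsto_atTop_mono' _ _ (Tendsto.atTop_mul_const hρ tendsto_id : Tendsto (fun s : ℝ => s * ρ) atTop atTop)
    filter_upwards [eventually_ge_atTop (0:ℝ)] with s hs
    have := hΛnonneg s hs
    simp only [hG]; nlinarith
  have hbot : Tendsto G atBot atBot := by
    apply tendsto_atBot_mono' _ _ (Tendsto.atBot_mul_const hρ tendsto_id : Tendsto (fun s : ℝ => s * ρ) atBot atBot)
    filter_upwards [eventually_le_atBot (0:ℝ)] with s hs
    have := hΛnonpos s hs
    simp only [hG]; nlinarith
  have hsurj : Function.Surjective G := Continuous.surjective contG htop hbot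
  set e : ℝ ≃o ℝ := StrictMono.orderIsoOfSurjective G smono hsurj with he
  have hecoe : ∀ x, e x = G x := fun x => rfl
  set μ : Measure ℝ :=
    (volume.restrict (Ioc a c)).withDensity (fun s => ENNReal.ofReal (ρ + lam s)) with hμ
  have hdens : ∀ p q : ℝ, (∫⁻ s in Ioc p q, ENNReal.ofReal (ρ + lam s)) =
      ENNReal.ofReal (G q - G p) := by
    intro p q
    rcases le_or_gt p q with hpq | hpq
    · have hint : IntegrableOn (fun s => ρ + lam s) (Ioc p q) volume :=
        (intervalIntegrable_const.add (hloc p q)).1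
      rw [← ofReal_integral_eq_lintegral_ofReal hint
          (ae_of_all _ fun s => by
            simp only [Pi.zero_apply]; linarith [hnn s])]
      congr 1
      rw [← intervalIntegral.integral_of_le hpq]
      exact hGdiff p q
    · rw [Ioc_eq_empty (not_lt.mpr hpq.le)]
      simp [ENNReal.ofReal_eq_zero.mpr (by nlinarith [smono hpq] : G q - G p ≤ 0)]
  have hμfin : IsFiniteMeasure μ := by
    constructor
    rw [hμ, withDensity_apply _ MeasurableSet.univ, Measure.restrict_restrict MeasurableSet.univ,
      Set.univ_inter]
    rw [hdens a c]
    exact ENNReal.ofReal_lt_top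
  have hmapfin : IsFiniteMeasure (Measure.map G μ) := by
    constructor
    rw [Measure.map_apply contG.measurable MeasurableSet.univ]
    exact lt_of_le_of_lt (measure_mono (Set.subset_univ _)) hμfin.measure_univ_lt_top
  have hmap : Measure.map G μ = volume.restrict (Ioc (G a) (G c)) := by
    refine Measure.ext_of_Ioc _ _ (fun u v huv => ?_)
    rw [Measure.map_apply contG.measurable measurableSet_Ioc]
    have hpre : G ⁻¹' Ioc u v = Ioc (e.symm u) (e.symm v) := e.preimage_Ioc u v
    rw [hpre, hμ, withDensity_apply _ measurableSet_Ioc,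
      Measure.restrict_restrict measurableSet_Ioc, Set.Ioc_inter_Ioc, hdens]
    have hGmax : G (e.symm u ⊔ a) = u ⊔ G a := by
      rw [smono.monotone.map_max]
      congr 1
      exact StrictMono.orderIsoOfSurjective_self_symm_apply G smono hsurj u
    have hGmin : G (e.symm v ⊓ c) = v ⊓ G c := by
      rw [smono.monotone.map_min]
      congr 1
      exact StrictMono.orderIsoOfSurjective_self_symm_apply G smono hsurj v
    rw [hGmax, hGmin, Measure.restrict_apply measurableSet_Ioc, Set.Ioc_inter_Ioc,
      Real.volume_Ioc]
  -- compute the integral of exp(-x) over Ioc (G a) (G c)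
  have hGle : G a ≤ G c := smono.monotone hac
  have hexpint : ∫ x in Ioc (G a) (G c), Real.exp (-x) =
      Real.exp (-G a) - Real.exp (-G c) := by
    rw [← intervalIntegral.integral_of_le hGle]
    rw [show (fun x => Real.exp (-x)) = fun x => Real.exp (-x) from rfl]
    rw [intervalIntegral.integral_comp_neg (fun x => Real.exp x)]
    rw [integral_exp]
  have meas_f : Measurable fun s => Real.toNNReal (ρ + lam s) :=
    (measurable_const.add hm).real_toNNReal
  have step1 : (∫ x, Real.exp (-x) ∂(Measure.map G μ)) =
      ∫ s in Ioc a c, (ρ + lam s) * Real.exp (-(ρ * s + Λ s)) := by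
    have hgm : AEStronglyMeasurable (fun x : ℝ => Real.exp (-x)) (Measure.map G μ) :=
      Continuous.aestronglyMeasurable (by fun_prop)
    rw [integral_map contG.measurable.aemeasurable hgm]
    rw [hμ]
    rw [show (fun s => ENNReal.ofReal (ρ + lam s)) =
        (fun s => ((fun u => Real.toNNReal (ρ + lam u)) s : ℝ≥0∞)) from rfl]
    rw [integral_withDensity_eq_integral_smul meas_f]
    refine integral_congr_ae (ae_of_all _ fun s => ?_)
    have hnn' : (0:ℝ) ≤ ρ + lam s := by linarith [hnn s]
    simp [NNReal.smul_def, Real.coe_toNNReal _ hnn', hG]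
  calc ∫ s in Ioc a c, (ρ + lam s) * Real.exp (-(ρ * s + Λ s))
      = ∫ x, Real.exp (-x) ∂(Measure.map G μ) := step1.symm
    _ = ∫ x in Ioc (G a) (G c), Real.exp (-x) := by rw [hmap]
    _ = Real.exp (-G a) - Real.exp (-G c) := hexpint


/-- Define `φ(t) = ∫ₜ^∞ e^{-ρs}S(s)(1 + bλ(s)) ds` with `ρ > 0`, `b ≥ 0`,
`S(t) = exp(-∫₀ᵗ λ)` and `M_τ(-ρ,t) ∈ [0,1]` the conditional exponential moment.
Then `φ(t) = e^{-ρt}S(t)(1 - (1-bρ)M_τ(-ρ,t))/ρ`, hence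
`φ(t) ≤ e^{-ρt}S(t)(1+bρ)/ρ`, and `c*(t) = ρ/(1 - (1-bρ)M_τ(-ρ,t))` satisfies
`c*(t) = e^{-ρt}S(t)/φ(t)` and `φ(t)c*(t) ≤ e^{-ρt}`. -/
theorem stmt_16 (ρ b : ℝ) (hρ : 0 < ρ) (hb : 0 ≤ b)
    (lam : ℝ → ℝ) (hnn : ∀ t, 0 ≤ lam t)
    (hloc : ∀ t : ℝ, IntervalIntegrable lam volume 0 t)
    (S M φ : ℝ → ℝ)
    (hS : ∀ t, S t = Real.exp (-∫ s in (0:ℝ)..t, lam s))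
    (hM : ∀ t, M t = (∫ s in Set.Ioi t, Real.exp (-ρ * (s - t)) * S s * lam s) / S t)
    (hM01 : ∀ t, M t ∈ Set.Icc (0:ℝ) 1)
    (hφ : ∀ t, φ t = ∫ s in Set.Ioi t, Real.exp (-ρ * s) * S s * (1 + b * lam s))
    (t : ℝ) (ht : 0 ≤ t) :
    φ t = Real.exp (-ρ * t) * S t * (1 - (1 - b * ρ) * M t) / ρ ∧
    φ t ≤ Real.exp (-ρ * t) * S t * (1 + b * ρ) / ρ ∧
    ρ / (1 - (1 - b * ρ) * M t) = Real.exp (-ρ * t) * S t / φ t ∧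
    φ t * (ρ / (1 - (1 - b * ρ) * M t)) ≤ Real.exp (-ρ * t) := by
  -- interval integrability on all intervals
  have hloc2 : ∀ a c : ℝ, IntervalIntegrable lam volume a c :=
    fun a c => (hloc a).symm.trans (hloc c)
  -- a measurable nonnegative version of lam
  have hcover : (⋃ n : ℕ, Set.Ioc (-(n:ℝ)) n) = Set.univ := by
    ext x
    simp only [Set.mem_iUnion, Set.mem_univ, iff_true, Set.mem_Ioc]
    obtain ⟨n, hn⟩ := exists_nat_gt |x|
    exact ⟨n, by linarith [neg_abs_le x], by linarith [le_abs_self x]⟩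
  have hmeas : AEStronglyMeasurable lam volume := by
    rw [← Measure.restrict_univ (μ := volume), ← hcover,
      aestronglyMeasurable_iUnion_iff]
    exact fun n => ((hloc2 (-(n:ℝ)) n).1).aestronglyMeasurable
  set lam' : ℝ → ℝ := fun x => max (hmeas.mk lam x) 0 with hlam'
  have hm' : Measurable lam' := hmeas.stronglyMeasurable_mk.measurable.max measurable_const
  have heq : lam' =ᵐ[volume] lam := by
    filter_upwards [hmeas.ae_eq_mk] with x hx
    rw [hlam']
    simp only
    rw [← hx, max_eq_left (hnn x)]
  have hnn' : ∀ x, 0 ≤ lam' x := fun x => le_max_right _ _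
  have hloc2' : ∀ a c : ℝ, IntervalIntegrable lam' volume a c := by
    intro a c
    exact ⟨(hloc2 a c).1.congr (ae_restrict_of_ae heq.symm),
      (hloc2 a c).2.congr (ae_restrict_of_ae heq.symm)⟩
  have hΛeq : ∀ s : ℝ, (∫ u in (0:ℝ)..s, lam u) = ∫ u in (0:ℝ)..s, lam' u := by
    intro s
    exact intervalIntegral.integral_congr_ae ((heq.mono fun x hx => fun _ => hx.symm))
  set Λ : ℝ → ℝ := fun s => ∫ u in (0:ℝ)..s, lam' u with hΛdef
  have hSs : ∀ s, S s = Real.exp (-Λ s) := fun s => by rw [hS s, hΛeq s]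
  have contΛ : Continuous Λ := intervalIntegral.continuous_primitive (fun a c => hloc2' a c) 0
  have hSt : 0 < S t := by rw [hSs]; exact Real.exp_pos _
  have hΛnn : ∀ s : ℝ, 0 ≤ s → 0 ≤ Λ s := fun s hs =>
    intervalIntegral.integral_nonneg hs (fun u _ => hnn' u)
  have hSle1 : ∀ s : ℝ, 0 ≤ s → S s ≤ 1 := by
    intro s hs
    rw [hSs]
    exact Real.exp_le_one_iff.mpr (by linarith [hΛnn s hs])
  -- the key identity on finite intervals
  have K : ∀ u : ℝ, t ≤ u →
      (∫ s in Set.Ioc t u, (ρ + lam' s) * Real.exp (-(ρ * s + Λ s))) =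
        Real.exp (-(ρ * t + Λ t)) - Real.exp (-(ρ * u + Λ u)) :=
    fun u hu => cov_key ρ hρ lam' hm' hnn' hloc2' hu
  set h0 : ℝ → ℝ := fun s => (ρ + lam' s) * Real.exp (-(ρ * s + Λ s)) with hh0def
  have hh0nn : ∀ s, 0 ≤ h0 s := fun s =>
    mul_nonneg (by linarith [hnn' s]) (Real.exp_pos _).le
  have hh0int : ∀ u : ℝ, IntervalIntegrable h0 volume t u := by
    intro u
    exact (intervalIntegrable_const.add (hloc2' t u)).mul_continuousOn
      (((Real.continuous_exp.comp
        (((continuous_const.mul continuous_id).add contΛ).neg)).continuousOn))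
  have hbound : ∀ u : ℝ, (∫ s in t..u, ‖h0 s‖) ≤ Real.exp (-(ρ * t + Λ t)) := by
    intro u
    have hnorm : ∀ v w : ℝ, (∫ s in v..w, ‖h0 s‖) = ∫ s in v..w, h0 s :=
      fun v w => intervalIntegral.integral_congr (fun s _ => Real.norm_of_nonneg (hh0nn s))
    rw [hnorm]
    rcases le_or_gt t u with hu | hu
    · rw [intervalIntegral.integral_of_le hu, K u hu]
      have := Real.exp_pos (-(ρ * u + Λ u))
      linarith
    · rw [intervalIntegral.integral_symm]
      have h1 : 0 ≤ ∫ s in u..t, h0 s :=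
        intervalIntegral.integral_nonneg hu.le (fun s _ => hh0nn s)
      have := Real.exp_pos (-(ρ * t + Λ t))
      linarith
  have hIntIoi : IntegrableOn h0 (Set.Ioi t) volume :=
    integrableOn_Ioi_of_intervalIntegral_norm_bounded (Real.exp (-(ρ * t + Λ t))) t
      (fun i => (hh0int i).1) tendsto_id (Filter.Eventually.of_forall hbound)
  have hval : (∫ s in Set.Ioi t, h0 s) = Real.exp (-(ρ * t + Λ t)) := by
    have h1 := intervalIntegral_tendsto_integral_Ioi t hIntIoi tendsto_id
    have hGtop : Filter.Tendsto (fun u : ℝ => ρ * u + Λ u) Filter.atTop Filter.atTop := by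
      apply Filter.tendsto_atTop_mono' _ _
        (Filter.Tendsto.atTop_mul_const hρ tendsto_id :
          Filter.Tendsto (fun s : ℝ => s * ρ) Filter.atTop Filter.atTop)
      filter_upwards [Filter.eventually_ge_atTop (0:ℝ)] with s hs
      have := hΛnn s hs
      nlinarith
    have hexp0 : Filter.Tendsto (fun u : ℝ => Real.exp (-(ρ * u + Λ u)))
        Filter.atTop (nhds 0) :=
      Real.tendsto_exp_atBot.comp (Filter.tendsto_neg_atTop_atBot.comp hGtop)
    have h2 : Filter.Tendsto (fun u => ∫ s in t..u, h0 s) Filter.atTop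
        (nhds (Real.exp (-(ρ * t + Λ t)))) := by
      have hcongr : (fun u => ∫ s in t..u, h0 s) =ᶠ[Filter.atTop]
          fun u => Real.exp (-(ρ * t + Λ t)) - Real.exp (-(ρ * u + Λ u)) := by
        filter_upwards [Filter.eventually_ge_atTop t] with u hu
        rw [intervalIntegral.integral_of_le hu]
        exact K u hu
      rw [Filter.tendsto_congr' hcongr]
      simpa using Filter.Tendsto.sub tendsto_const_nhds hexp0
    exact tendsto_nhds_unique h1 h2
  -- split into the two pieces
  set f1 : ℝ → ℝ := fun s => Real.exp (-ρ * s) * S s with hf1def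
  have hexpS : ∀ s, Real.exp (-(ρ * s + Λ s)) = f1 s := by
    intro s
    rw [hf1def]
    simp only
    rw [hSs s, ← Real.exp_add]
    congr 1
    ring
  have hh0eq : ∀ s, h0 s = ρ * f1 s + f1 s * lam' s := by
    intro s
    rw [hh0def]
    simp only
    rw [hexpS s]
    ring
  have hf1cont : Continuous f1 := by
    have hScont : Continuous S := by
      have : S = fun u => Real.exp (-Λ u) := funext hSs
      rw [this]
      exact Real.continuous_exp.comp contΛ.neg
    exact ((Real.continuous_exp.comp (continuous_const.mul continuous_id)).mul hScont)
  have hf1int : IntegrableOn f1 (Set.Ioi t) volume := by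
    apply Integrable.mono' (exp_neg_integrableOn_Ioi t hρ)
      hf1cont.aestronglyMeasurable.restrict
    filter_upwards [ae_restrict_mem measurableSet_Ioi] with s hs
    have hs0 : (0:ℝ) ≤ s := le_trans ht (le_of_lt hs)
    have h1 : S s ≤ 1 := hSle1 s hs0
    have h2 : 0 < S s := by rw [hSs]; exact Real.exp_pos _
    rw [Real.norm_of_nonneg (mul_nonneg (Real.exp_pos _).le h2.le)]
    nlinarith [Real.exp_pos (-ρ * s)]
  set f2 : ℝ → ℝ := fun s => f1 s * lam' s with hf2def
  have hf2int : IntegrableOn f2 (Set.Ioi t) volume := by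
    have : f2 = fun s => h0 s - ρ * f1 s := funext fun s => by
      rw [hf2def]; simp only; rw [hh0eq s]; ring
    rw [this]
    exact hIntIoi.sub (hf1int.const_mul ρ)
  set I : ℝ := ∫ s in Set.Ioi t, f1 s with hIdef
  set J : ℝ := ∫ s in Set.Ioi t, f2 s with hJdef
  have hsum : ρ * I + J = Real.exp (-ρ * t) * S t := by
    have h1 : (∫ s in Set.Ioi t, h0 s) = ∫ s in Set.Ioi t, (ρ * f1 s + f2 s) := by
      refine integral_congr_ae (ae_of_all _ fun s => ?_)
      rw [hh0eq s, hf2def]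
    have h2 : (∫ s in Set.Ioi t, (ρ * f1 s + f2 s)) = ρ * I + J := by
      rw [integral_add (hf1int.const_mul ρ) hf2int, integral_const_mul]
    rw [← h2, ← h1, hval, hexpS t]
  -- identify J with M t
  have hJM : J = Real.exp (-ρ * t) * S t * M t := by
    have h1 : (∫ s in Set.Ioi t, Real.exp (-ρ * (s - t)) * S s * lam s) =
        Real.exp (ρ * t) * J := by
      have h2 : (∫ s in Set.Ioi t, Real.exp (-ρ * (s - t)) * S s * lam s) =
          ∫ s in Set.Ioi t, Real.exp (ρ * t) * f2 s := by
        refine integral_congr_ae ?_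
        filter_upwards [ae_restrict_of_ae heq] with s hs
        rw [hf2def]
        simp only
        rw [hf1def]
        simp only
        rw [← hs,
          show Real.exp (-ρ * (s - t)) = Real.exp (ρ * t) * Real.exp (-ρ * s) from by
            rw [← Real.exp_add]; congr 1; ring]
        ring
      rw [h2, integral_const_mul]
    have h3 := hM t
    rw [h1] at h3
    have h4 : Real.exp (ρ * t) * J = M t * S t := by
      rw [h3]; field_simp
    have h5 : Real.exp (-ρ * t) * Real.exp (ρ * t) = 1 := by
      rw [← Real.exp_add, show -ρ * t + ρ * t = 0 from by ring, Real.exp_zero]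
    have h6 : J = Real.exp (-ρ * t) * (Real.exp (ρ * t) * J) := by
      rw [← mul_assoc, h5, one_mul]
    rw [h6, h4]; ring
  -- φ in terms of I, J
  have hφIJ : φ t = I + b * J := by
    rw [hφ t]
    have h1 : (∫ s in Set.Ioi t, Real.exp (-ρ * s) * S s * (1 + b * lam s)) =
        ∫ s in Set.Ioi t, (f1 s + b * f2 s) := by
      refine integral_congr_ae ?_
      filter_upwards [ae_restrict_of_ae heq] with s hs
      rw [hf2def, hf1def]
      simp only
      rw [← hs]
      ring
    rw [h1, integral_add hf1int (hf2int.const_mul b), integral_const_mul]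
  -- now pure algebra
  have hm01 := hM01 t
  rw [Set.mem_Icc] at hm01
  obtain ⟨hm0, hm1⟩ := hm01
  have hE : 0 < Real.exp (-ρ * t) := Real.exp_pos _
  have hIval : I = (Real.exp (-ρ * t) * S t - J) / ρ := by
    rw [eq_div_iff hρ.ne']
    linear_combination hsum
  have goal1 : φ t = Real.exp (-ρ * t) * S t * (1 - (1 - b * ρ) * M t) / ρ := by
    rw [hφIJ, hIval, hJM]
    field_simp
    ring
  refine ⟨goal1, ?_, ?_, ?_⟩
  · rw [goal1]
    rw [div_le_div_iff_of_pos_right hρ]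
    nlinarith [mul_nonneg (mul_nonneg hE.le hSt.le)
        (mul_nonneg (mul_nonneg hb hρ.le) (sub_nonneg.mpr hm1)),
      mul_nonneg (mul_nonneg hE.le hSt.le) hm0]
  · rcases eq_or_ne (1 - (1 - b * ρ) * M t) 0 with hD0 | hD0
    · have hφ0 : φ t = 0 := by rw [goal1, hD0]; simp
      rw [hD0, hφ0, div_zero, div_zero]
    · rw [goal1]
      field_simp
  · rcases eq_or_ne (1 - (1 - b * ρ) * M t) 0 with hD0 | hD0
    · rw [hD0, div_zero, mul_zero]
      exact hE.le
    · have hval2 : φ t * (ρ / (1 - (1 - b * ρ) * M t)) = Real.exp (-ρ * t) * S t := by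
        rw [goal1]
        field_simp
        rw [mul_comm ρ b]; exact div_self hD0
      rw [hval2]
      nlinarith [hSle1 t ht]
end
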